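/- Let n ≥ 1, θ > 0, fix P ∈ ℝⁿ, let H : ℝⁿ × ℝⁿ → ℝ be continuously differentiable, and let z : ℝⁿ → ℝ be three times continuously differentiable and satisfy θ z(y) + H(P + ∇z(y), y) = θ² Δz(y) for every y ∈ ℝⁿ. Then the function w(y) := |∇z(y)|²/2 satisfies, at every y ∈ ℝⁿ, the identity 2θ w(y) + D_pH(P + ∇z(y), y) · ∇w(y) + D_yH(P + ∇z(y), y) · ∇z(y) = θ² Δw(y) − θ² |D²z(y)|². -/

import Mathlib

open scoped RealInnerProductSpace

/-- The second partial derivative ∂²u/∂xᵢ∂xₖ of `u` at `x`. -/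
noncomputable def pd2 {n : ℕ} (u : EuclideanSpace ℝ (Fin n) → ℝ)
    (x : EuclideanSpace ℝ (Fin n)) (i k : Fin n) : ℝ :=
  fderiv ℝ (fun y => fderiv ℝ u y (EuclideanSpace.single k 1)) x (EuclideanSpace.single i 1)

/-- The Laplacian of `u` at `x`: the sum of the second partial derivatives ∂²u/∂xᵢ². -/
noncomputable def lap {n : ℕ} (u : EuclideanSpace ℝ (Fin n) → ℝ)
    (x : EuclideanSpace ℝ (Fin n)) : ℝ :=
  ∑ i, pd2 u x i i


/-- |D²z(y)|² : the sum over all i, k of (∂²z/∂yᵢ∂yₖ)². -/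
noncomputable def hessSq {n : ℕ} (u : EuclideanSpace ℝ (Fin n) → ℝ)
    (x : EuclideanSpace ℝ (Fin n)) : ℝ :=
  ∑ i, ∑ k, (pd2 u x i k) ^ 2

/-! ### Auxiliary definitions and lemmas -/

/-- First partial derivative. -/
noncomputable def pd {n : ℕ} (u : EuclideanSpace ℝ (Fin n) → ℝ)
    (x : EuclideanSpace ℝ (Fin n)) (k : Fin n) : ℝ :=
  fderiv ℝ u x (EuclideanSpace.single k 1)

namespace Stmt14Aux

variable {n : ℕ}

lemma inner_grad (u : EuclideanSpace ℝ (Fin n) → ℝ) (x v : EuclideanSpace ℝ (Fin n)) :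
    ⟪gradient u x, v⟫ = fderiv ℝ u x v := by
  rw [gradient]; exact InnerProductSpace.toDual_symm_apply

lemma grad_apply (u : EuclideanSpace ℝ (Fin n) → ℝ) (x : EuclideanSpace ℝ (Fin n)) (i : Fin n) :
    gradient u x i = pd u x i := by
  have h := inner_grad u x (EuclideanSpace.single i 1)
  rw [EuclideanSpace.inner_single_right] at h
  simpa [pd] using h

lemma real_inner_eq (u v : EuclideanSpace ℝ (Fin n)) : ⟪u, v⟫ = ∑ i, u i * v i := by
  simp [PiLp.inner_apply, RCLike.inner_apply, conj_trivial]
  exact Finset.sum_congr rfl fun i _ => mul_comm _ _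

lemma norm_sq_eq (v : EuclideanSpace ℝ (Fin n)) : ‖v‖ ^ 2 = ∑ i, (v i) ^ 2 := by
  rw [EuclideanSpace.norm_eq, Real.sq_sqrt (by positivity)]
  simp [Real.norm_eq_abs, sq_abs]

lemma contDiff_pd {m N : WithTop ℕ∞} {u : EuclideanSpace ℝ (Fin n) → ℝ}
    (hu : ContDiff ℝ N u) (h : m + 1 ≤ N) (k : Fin n) :
    ContDiff ℝ m (fun y => pd u y k) :=
  (hu.fderiv_right h).clm_apply contDiff_const

lemma pd2_eq_pd_pd (u : EuclideanSpace ℝ (Fin n) → ℝ) (x : EuclideanSpace ℝ (Fin n))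
    (i k : Fin n) : pd2 u x i k = pd (fun y => pd u y k) x i := rfl

lemma fderiv_apply_const {u : EuclideanSpace ℝ (Fin n) → ℝ} {x : EuclideanSpace ℝ (Fin n)}
    (hd : DifferentiableAt ℝ (fderiv ℝ u) x) (w v : EuclideanSpace ℝ (Fin n)) :
    fderiv ℝ (fun y => fderiv ℝ u y w) x v = fderiv ℝ (fderiv ℝ u) x v w := by
  have h : fderiv ℝ (fun y => (fderiv ℝ u y) ((fun _ => w) y)) x
      = (fderiv ℝ u x).comp (fderiv ℝ (fun _ : EuclideanSpace ℝ (Fin n) => w) x)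
        + (fderiv ℝ (fderiv ℝ u) x).flip w := fderiv_clm_apply hd (differentiableAt_const w)
  simp only [fderiv_const, Pi.zero_apply] at h
  rw [show (fun y => fderiv ℝ u y w) = fun y => (fderiv ℝ u y) ((fun _ => w) y) from rfl, h]
  simp

lemma pd2_eq_snd (u : EuclideanSpace ℝ (Fin n) → ℝ) (x : EuclideanSpace ℝ (Fin n))
    (hd : DifferentiableAt ℝ (fderiv ℝ u) x) (i k : Fin n) :
    pd2 u x i k
      = fderiv ℝ (fderiv ℝ u) x (EuclideanSpace.single i 1) (EuclideanSpace.single k 1) := by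
  rw [pd2]; exact fderiv_apply_const hd _ _

lemma pd2_symm {u : EuclideanSpace ℝ (Fin n) → ℝ} (hu : ContDiff ℝ 2 u)
    (x : EuclideanSpace ℝ (Fin n)) (i k : Fin n) : pd2 u x i k = pd2 u x k i := by
  have hd : DifferentiableAt ℝ (fderiv ℝ u) x :=
    ((hu.fderiv_right (m := 1) (by norm_num)).differentiable one_ne_zero).differentiableAt
  rw [pd2_eq_snd u x hd, pd2_eq_snd u x hd]
  exact hu.contDiffAt.isSymmSndFDerivAt (by simp [minSmoothness_of_isRCLikeNormedField]) _ _

lemma contDiff_grad {m N : WithTop ℕ∞} {u : EuclideanSpace ℝ (Fin n) → ℝ}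
    (hu : ContDiff ℝ N u) (h : m + 1 ≤ N) : ContDiff ℝ m (gradient u) := by
  have hg : gradient u
      = fun x => (InnerProductSpace.toDual ℝ (EuclideanSpace ℝ (Fin n))).symm (fderiv ℝ u x) :=
    rfl
  rw [hg]
  exact (InnerProductSpace.toDual ℝ (EuclideanSpace ℝ (Fin n))).symm.contDiff.comp
    (hu.fderiv_right h)

lemma fderiv_grad_apply {u : EuclideanSpace ℝ (Fin n) → ℝ} (y v : EuclideanSpace ℝ (Fin n))
    (i : Fin n) :
    fderiv ℝ (gradient u) y v i
      = fderiv ℝ (fderiv ℝ u) y v (EuclideanSpace.single i 1) := by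
  have h : gradient u
      = (InnerProductSpace.toDual ℝ (EuclideanSpace ℝ (Fin n))).symm ∘ fderiv ℝ u := rfl
  rw [h, LinearIsometryEquiv.comp_fderiv]
  simp only [ContinuousLinearMap.coe_comp', Function.comp_apply, LinearIsometryEquiv.coe_coe]
  have h2 := InnerProductSpace.toDual_symm_apply (𝕜 := ℝ)
    (x := (EuclideanSpace.single i 1 : EuclideanSpace ℝ (Fin n)))
    (y := fderiv ℝ (fderiv ℝ u) y v)
  rw [← h2, real_inner_comm, EuclideanSpace.inner_single_left]
  simp

lemma clm_apply_eq_sum (L : (EuclideanSpace ℝ (Fin n)) →L[ℝ] ℝ) (v : EuclideanSpace ℝ (Fin n)) :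
    L v = ∑ i, v i * L (EuclideanSpace.single i 1) := by
  have hv : v = ∑ i, v i • (EuclideanSpace.single i (1:ℝ) : EuclideanSpace ℝ (Fin n)) := by
    have h := (EuclideanSpace.basisFun (Fin n) ℝ).sum_repr v
    simp only [EuclideanSpace.basisFun_repr, EuclideanSpace.basisFun_apply] at h
    exact h.symm
  conv_lhs => rw [hv]
  rw [map_sum]
  simp [smul_eq_mul]


lemma diff_pd {z : EuclideanSpace ℝ (Fin n) → ℝ} (hz : ContDiff ℝ 3 z) (i : Fin n) :
    Differentiable ℝ (fun y => pd z y i) :=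
  (contDiff_pd hz (m := 2) (by norm_num) i).differentiable (by norm_num)

lemma diff_pd2 {z : EuclideanSpace ℝ (Fin n) → ℝ} (hz : ContDiff ℝ 3 z) (i k : Fin n) :
    Differentiable ℝ (fun y => pd2 z y i k) := by
  have h : (fun y => pd2 z y i k) = fun y => pd (fun y' => pd z y' k) y i := rfl
  rw [h]
  exact (contDiff_pd (contDiff_pd hz (m := 2) (by norm_num) k) (m := 1) (by norm_num)
    i).differentiable (by norm_num)

lemma pd_sum {f : Fin n → EuclideanSpace ℝ (Fin n) → ℝ} {y : EuclideanSpace ℝ (Fin n)}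
    (hf : ∀ i, DifferentiableAt ℝ (f i) y) (k : Fin n) :
    pd (fun y' => ∑ i, f i y') y k = ∑ i, pd (f i) y k := by
  have h := HasFDerivAt.fun_sum (u := Finset.univ)
    (fun i _ => (hf i).hasFDerivAt)
  have h2 := h.fderiv
  rw [pd, h2]
  simp [pd]

lemma pd_sum_mul {f g : Fin n → EuclideanSpace ℝ (Fin n) → ℝ} {y : EuclideanSpace ℝ (Fin n)}
    (hf : ∀ i, DifferentiableAt ℝ (f i) y) (hg : ∀ i, DifferentiableAt ℝ (g i) y) (k : Fin n) :
    pd (fun y' => ∑ i, f i y' * g i y') y k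
      = ∑ i, (pd (f i) y k * g i y + f i y * pd (g i) y k) := by
  have h := HasFDerivAt.fun_sum (u := Finset.univ)
    (fun i (_ : i ∈ Finset.univ) => ((hf i).hasFDerivAt.fun_mul (hg i).hasFDerivAt))
  have h2 := h.fderiv
  rw [pd, h2]
  simp only [ContinuousLinearMap.coe_sum', Finset.sum_apply, ContinuousLinearMap.add_apply,
    ContinuousLinearMap.coe_smul', Pi.smul_apply, smul_eq_mul]
  exact Finset.sum_congr rfl fun i _ => by rw [pd, pd]; ring

lemma w_pd {z : EuclideanSpace ℝ (Fin n) → ℝ} (hz : ContDiff ℝ 3 z)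
    (y : EuclideanSpace ℝ (Fin n)) (k : Fin n) :
    pd (fun y' => (∑ i, pd z y' i ^ 2) / 2) y k = ∑ i, pd z y i * pd2 z y k i := by
  have h : (fun y' => (∑ i, pd z y' i ^ 2) / 2)
      = fun y' => (∑ i, pd z y' i * pd z y' i) * (2⁻¹ : ℝ) := by
    funext y'; rw [div_eq_mul_inv]; congr 1; exact Finset.sum_congr rfl fun i _ => sq (pd z y' i)
  rw [h, pd]
  have hd : ∀ i : Fin n, DifferentiableAt ℝ (fun y' => pd z y' i) y := fun i => (diff_pd hz i) y
  have hs : DifferentiableAt ℝ (fun y' => ∑ i, pd z y' i * pd z y' i) y :=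
    DifferentiableAt.fun_sum fun i _ => (hd i).mul (hd i)
  rw [fderiv_mul_const hs]
  simp only [ContinuousLinearMap.coe_smul', Pi.smul_apply, smul_eq_mul]
  have h2 : fderiv ℝ (fun y' => ∑ i, pd z y' i * pd z y' i) y (EuclideanSpace.single k 1)
      = ∑ i, (pd2 z y k i * pd z y i + pd z y i * pd2 z y k i) := by
    have := pd_sum_mul (f := fun i y' => pd z y' i) (g := fun i y' => pd z y' i) hd hd k
    rw [pd] at this
    rw [this]
    exact Finset.sum_congr rfl fun i _ => rfl
  rw [h2, Finset.mul_sum]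
  exact Finset.sum_congr rfl fun i _ => by ring

-- third partial derivative at y: ∂ₐ∂_b∂_c z
lemma S_swap12 {z : EuclideanSpace ℝ (Fin n) → ℝ} (hz : ContDiff ℝ 3 z)
    (y : EuclideanSpace ℝ (Fin n)) (a b c : Fin n) :
    pd (fun y' => pd2 z y' b c) y a = pd (fun y' => pd2 z y' a c) y b := by
  have h1 : pd (fun y' => pd2 z y' b c) y a = pd2 (fun y'' => pd z y'' c) y a b := rfl
  have h2 : pd (fun y' => pd2 z y' a c) y b = pd2 (fun y'' => pd z y'' c) y b a := rfl
  rw [h1, h2]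
  exact pd2_symm (contDiff_pd hz (m := 2) (by norm_num) c) y a b

lemma S_symm_last {z : EuclideanSpace ℝ (Fin n) → ℝ} (hz : ContDiff ℝ 3 z)
    (y : EuclideanSpace ℝ (Fin n)) (a b c : Fin n) :
    pd (fun y' => pd2 z y' b c) y a = pd (fun y' => pd2 z y' c b) y a := by
  have h : (fun y' => pd2 z y' b c) = fun y' => pd2 z y' c b :=
    funext fun y' => pd2_symm (hz.of_le (by norm_num)) y' b c
  rw [h]

end Stmt14Aux

open Stmt14Aux in
theorem stmt14 (n : ℕ) (hn : 1 ≤ n) (θ : ℝ) (hθ : 0 < θ)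
    (P : EuclideanSpace ℝ (Fin n))
    (H : EuclideanSpace ℝ (Fin n) × EuclideanSpace ℝ (Fin n) → ℝ) (hH : ContDiff ℝ 1 H)
    (z : EuclideanSpace ℝ (Fin n) → ℝ) (hz : ContDiff ℝ 3 z)
    (heq : ∀ y, θ * z y + H (P + gradient z y, y) = θ ^ 2 * lap z y) :
    ∀ y, 2 * θ * (‖gradient z y‖ ^ 2 / 2)
        + ⟪gradient (fun q => H (q, y)) (P + gradient z y),
            gradient (fun y' => ‖gradient z y'‖ ^ 2 / 2) y⟫
        + ⟪gradient (fun w => H (P + gradient z y, w)) y, gradient z y⟫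
      = θ ^ 2 * lap (fun y' => ‖gradient z y'‖ ^ 2 / 2) y - θ ^ 2 * hessSq z y := by
  intro y
  classical
  have hz2 : ContDiff ℝ 2 z := hz.of_le (by norm_num)
  have hb_symm : ∀ i k : Fin n, pd2 z y i k = pd2 z y k i := fun i k => pd2_symm hz2 y i k
  -- rewrite the auxiliary function in coordinates
  have hwfun : (fun y' => ‖gradient z y'‖ ^ 2 / 2)
      = fun y' : EuclideanSpace ℝ (Fin n) => (∑ i, pd z y' i ^ 2) / 2 := by
    funext y'; rw [norm_sq_eq]; congr 1
    exact Finset.sum_congr rfl fun i _ => by rw [grad_apply]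
  rw [hwfun, norm_sq_eq (gradient z y), real_inner_eq, real_inner_eq]
  simp only [grad_apply]
  set p : EuclideanSpace ℝ (Fin n) := P + gradient z y with hp
  -- Laplacian of w
  have hlapz_pd : ∀ i : Fin n, pd (lap z) y i = ∑ k, pd (fun y' => pd2 z y' k k) y i := by
    intro i
    have hl : lap z = fun y' => ∑ k, pd2 z y' k k := rfl
    rw [hl]
    exact pd_sum (fun k => diff_pd2 hz k k y) i
  have hlap_w : lap (fun y' : EuclideanSpace ℝ (Fin n) => (∑ i, pd z y' i ^ 2) / 2) y
      = hessSq z y + ∑ i, pd z y i * pd (lap z) y i := by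
    have hterm : ∀ k : Fin n,
        pd2 (fun y' : EuclideanSpace ℝ (Fin n) => (∑ i, pd z y' i ^ 2) / 2) y k k
        = ∑ i, (pd2 z y k i * pd2 z y k i + pd z y i * pd (fun y' => pd2 z y' k i) y k) := by
      intro k
      rw [pd2_eq_pd_pd]
      have hfun : (fun y' => pd (fun y'' : EuclideanSpace ℝ (Fin n) =>
            (∑ i, pd z y'' i ^ 2) / 2) y' k)
          = fun y' => ∑ i, pd z y' i * pd2 z y' k i := funext fun y' => w_pd hz y' k
      rw [hfun]
      exact pd_sum_mul (fun i => diff_pd hz i y) (fun i => diff_pd2 hz k i y) k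
    have hl : lap (fun y' : EuclideanSpace ℝ (Fin n) => (∑ i, pd z y' i ^ 2) / 2) y
        = ∑ k, pd2 (fun y' : EuclideanSpace ℝ (Fin n) => (∑ i, pd z y' i ^ 2) / 2) y k k := rfl
    rw [hl]
    have hsplit : ∑ k : Fin n,
        ∑ i, (pd2 z y k i * pd2 z y k i + pd z y i * pd (fun y' => pd2 z y' k i) y k)
        = hessSq z y + ∑ i, pd z y i * pd (lap z) y i := by
      rw [Finset.sum_comm (f := fun k i =>
        pd2 z y k i * pd2 z y k i + pd z y i * pd (fun y' => pd2 z y' k i) y k)]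
      rw [show hessSq z y + ∑ i, pd z y i * pd (lap z) y i
          = ∑ i : Fin n, ((∑ k, pd2 z y i k ^ 2) + pd z y i * pd (lap z) y i) from by
        rw [Finset.sum_add_distrib, hessSq]]
      refine Finset.sum_congr rfl fun i _ => ?_
      rw [Finset.sum_add_distrib]
      congr 1
      · refine Finset.sum_congr rfl fun k _ => ?_
        rw [hb_symm k i]; ring
      · rw [hlapz_pd i, Finset.mul_sum]
        refine Finset.sum_congr rfl fun k _ => ?_
        congr 1
        -- third derivative symmetry: ∂ₖ∂ₖ∂ᵢ = ∂ᵢ∂ₖ∂ₖ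
        rw [S_symm_last hz y k k i, S_swap12 hz y k i k]
    rw [← hsplit]
    exact Finset.sum_congr rfl fun k _ => hterm k
  -- differentiate the PDE
  have hd2 : DifferentiableAt ℝ (fderiv ℝ z) y :=
    ((hz.fderiv_right (m := 2) (by norm_num)).differentiable (by norm_num)).differentiableAt
  have hG : HasFDerivAt (gradient z) (fderiv ℝ (gradient z) y) y :=
    (((contDiff_grad hz (m := 2) (by norm_num)).differentiable (by norm_num)) y).hasFDerivAt
  have hHd : HasFDerivAt H (fderiv ℝ H (p, y)) (p, y) :=
    ((hH.differentiable one_ne_zero) (p, y)).hasFDerivAt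
  have key : ∀ k : Fin n,
      θ * pd z y k + ((∑ i, pd2 z y k i * pd (fun q => H (q, y)) p i)
        + pd (fun w => H (p, w)) y k)
      = θ ^ 2 * pd (lap z) y k := by
    intro k
    have hΦ : HasFDerivAt (fun y' => (P + gradient z y', y'))
        ((fderiv ℝ (gradient z) y).prod
          (ContinuousLinearMap.id ℝ (EuclideanSpace ℝ (Fin n)))) y :=
      HasFDerivAt.prodMk (hG.const_add P) (hasFDerivAt_id y)
    have hcomp : HasFDerivAt (fun y' => H (P + gradient z y', y'))
        ((fderiv ℝ H (p, y)).comp ((fderiv ℝ (gradient z) y).prod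
          (ContinuousLinearMap.id ℝ (EuclideanSpace ℝ (Fin n))))) y := by
      exact HasFDerivAt.comp (f := fun y' => (P + gradient z y', y')) y hHd hΦ
    have hlapd : HasFDerivAt (lap z) (∑ i, fderiv ℝ (fun y' => pd2 z y' i i) y) y := by
      have hl : lap z = fun y' => ∑ i, pd2 z y' i i := rfl
      rw [hl]
      exact HasFDerivAt.fun_sum fun i _ => (diff_pd2 hz i i y).hasFDerivAt
    have hF1 : HasFDerivAt (fun y' => θ * z y' + H (P + gradient z y', y'))
        (θ • fderiv ℝ z y + (fderiv ℝ H (p, y)).comp ((fderiv ℝ (gradient z) y).prod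
          (ContinuousLinearMap.id ℝ (EuclideanSpace ℝ (Fin n))))) y :=
      (((hz.differentiable (by norm_num)) y).hasFDerivAt.const_mul θ).add hcomp
    have hF2 : HasFDerivAt (fun y' => θ ^ 2 * lap z y')
        ((θ ^ 2) • ∑ i, fderiv ℝ (fun y' => pd2 z y' i i) y) y := hlapd.const_mul (θ ^ 2)
    have hfg : (fun y' => θ * z y' + H (P + gradient z y', y'))
        = fun y' => θ ^ 2 * lap z y' := funext heq
    rw [hfg] at hF1
    have hLeq := hF1.unique hF2
    have hev := congrArg (fun L : EuclideanSpace ℝ (Fin n) →L[ℝ] ℝ =>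
      L (EuclideanSpace.single k 1)) hLeq
    simp only [ContinuousLinearMap.add_apply, ContinuousLinearMap.coe_smul', Pi.smul_apply,
      smul_eq_mul, ContinuousLinearMap.coe_comp', Function.comp_apply,
      ContinuousLinearMap.prod_apply, ContinuousLinearMap.coe_id', id_eq,
      ContinuousLinearMap.coe_sum', Finset.sum_apply] at hev
    -- left-hand side pieces
    have hsplit : fderiv ℝ H (p, y)
          (fderiv ℝ (gradient z) y (EuclideanSpace.single k 1), EuclideanSpace.single k 1)
        = fderiv ℝ H (p, y) (fderiv ℝ (gradient z) y (EuclideanSpace.single k 1), 0)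
          + fderiv ℝ H (p, y) (0, EuclideanSpace.single k 1) := by
      rw [← map_add]
      congr 1
      simp [Prod.ext_iff]
    have hleft : HasFDerivAt (fun q => H (q, y))
        ((fderiv ℝ H (p, y)).comp (ContinuousLinearMap.inl ℝ (EuclideanSpace ℝ (Fin n))
          (EuclideanSpace ℝ (Fin n)))) p := hHd.comp p (hasFDerivAt_prodMk_left p y)
    have hright : HasFDerivAt (fun w => H (p, w))
        ((fderiv ℝ H (p, y)).comp (ContinuousLinearMap.inr ℝ (EuclideanSpace ℝ (Fin n))
          (EuclideanSpace ℝ (Fin n)))) y := hHd.comp y (hasFDerivAt_prodMk_right p y)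
    have hL : fderiv ℝ H (p, y)
          (fderiv ℝ (gradient z) y (EuclideanSpace.single k 1), 0)
        = ∑ i, pd2 z y k i * pd (fun q => H (q, y)) p i := by
      have h1 : fderiv ℝ H (p, y)
            (fderiv ℝ (gradient z) y (EuclideanSpace.single k 1), 0)
          = fderiv ℝ (fun q => H (q, y)) p
            (fderiv ℝ (gradient z) y (EuclideanSpace.single k 1)) := by
        rw [hleft.fderiv]
        simp
      rw [h1, clm_apply_eq_sum]
      refine Finset.sum_congr rfl fun i _ => ?_
      congr 1
      rw [fderiv_grad_apply, ← pd2_eq_snd z y hd2 k i]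
    have hR : fderiv ℝ H (p, y) (0, EuclideanSpace.single k 1)
        = pd (fun w => H (p, w)) y k := by
      rw [pd, hright.fderiv]
      simp
    rw [hsplit, hL, hR] at hev
    rw [hlapz_pd k]
    have hRHS : ∀ i : Fin n, fderiv ℝ (fun y' => pd2 z y' i i) y (EuclideanSpace.single k 1)
        = pd (fun y' => pd2 z y' i i) y k := fun i => rfl
    simp only [hRHS] at hev
    exact hev
  -- final algebra
  rw [hlap_w]
  have hwpd : ∀ i : Fin n,
      pd (fun y' : EuclideanSpace ℝ (Fin n) => (∑ j, pd z y' j ^ 2) / 2) y i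
        = ∑ j, pd z y j * pd2 z y i j := fun i => w_pd hz y i
  simp only [hwpd]
  have hmid : ∑ i, pd (fun q => H (q, y)) p i * (∑ j, pd z y j * pd2 z y i j)
      = ∑ k, pd z y k * ∑ i, pd2 z y k i * pd (fun q => H (q, y)) p i := by
    simp only [Finset.mul_sum]
    rw [Finset.sum_comm]
    refine Finset.sum_congr rfl fun j _ => Finset.sum_congr rfl fun i _ => ?_
    rw [hb_symm j i]; ring
  have hsum : ∑ k, pd z y k * (θ * pd z y k
        + ((∑ i, pd2 z y k i * pd (fun q => H (q, y)) p i) + pd (fun w => H (p, w)) y k))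
      = ∑ k, pd z y k * (θ ^ 2 * pd (lap z) y k) :=
    Finset.sum_congr rfl fun k _ => by rw [key k]
  simp only [mul_add, Finset.sum_add_distrib] at hsum
  rw [hmid]
  have h1 : 2 * θ * ((∑ i, pd z y i ^ 2) / 2) = ∑ k, pd z y k * (θ * pd z y k) := by
    rw [show (2 : ℝ) * θ * ((∑ i, pd z y i ^ 2) / 2) = θ * ∑ i, pd z y i ^ 2 from by ring,
      Finset.mul_sum]
    exact Finset.sum_congr rfl fun i _ => by ring
  have h3 : ∑ i, pd (fun w => H (p, w)) y i * pd z y i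
      = ∑ k, pd z y k * pd (fun w => H (p, w)) y k :=
    Finset.sum_congr rfl fun i _ => by ring
  rw [h1, h3]
  have h4 : θ ^ 2 * (hessSq z y + ∑ i, pd z y i * pd (lap z) y i) - θ ^ 2 * hessSq z y
      = ∑ k, pd z y k * (θ ^ 2 * pd (lap z) y k) := by
    rw [show θ ^ 2 * (hessSq z y + ∑ i, pd z y i * pd (lap z) y i) - θ ^ 2 * hessSq z y
        = θ ^ 2 * ∑ i, pd z y i * pd (lap z) y i from by ring, Finset.mul_sum]
    exact Finset.sum_congr rfl fun i _ => by ring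
  rw [h4, ← hsum]
  ring
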